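/- Let K be a compact metrizable abelian group with Haar probability measure m, and let I be a measurable subset with m(I) > 0 and m(I - I) < (3/2) m(I). Then I - I is an open subgroup of K. -/

import Mathlib

open MeasureTheory
open scoped Pointwise

theorem stmt5 {K : Type*} [AddCommGroup K] [TopologicalSpace K] [IsTopologicalAddGroup K]
    [CompactSpace K] [TopologicalSpace.MetrizableSpace K]
    [MeasurableSpace K] [BorelSpace K]
    (m : Measure K) [m.IsAddHaarMeasure] [IsProbabilityMeasure m]
    (I : Set K) (hI : MeasurableSet I) (hIpos : 0 < m I)
    (h : m (I - I) < (3 / 2 : ENNReal) * m I) :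
    ∃ H : AddSubgroup K, IsOpen (H : Set K) ∧ I - I = (H : Set K) := by
  have hIfin : m I ≠ ⊤ := (measure_lt_top m I).ne
  have h32 : (3/2 : ENNReal) * m I + m I / 2 = 2 * m I := by
    have e : (3/2:ENNReal) = 1 + 1/2 := by
      symm
      rw [ENNReal.eq_div_iff (by norm_num) (by norm_num), mul_add, mul_one, mul_one_div,
        ENNReal.div_self (by norm_num) (by norm_num)]
      norm_num
    rw [e, add_mul, one_mul, one_div, ← ENNReal.div_eq_inv_mul, add_assoc,
      ENNReal.add_halves, two_mul]
  -- key: for x ∈ I - I, the intersection (x +ᵥ I) ∩ I has measure > m I / 2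
  have key : ∀ x ∈ I - I, m I / 2 < m ((x +ᵥ I) ∩ I) := by
    intro x hx
    obtain ⟨a, ha, b, hb, rfl⟩ := hx
    have hvm : MeasurableSet (((a - b) +ᵥ I)) := hI.const_vadd _
    have hsub : ((a - b) +ᵥ I) ∪ I ⊆ a +ᵥ (I - I) := by
      rintro z (⟨i, hi, rfl⟩ | hz)
      · exact ⟨i - b, Set.sub_mem_sub hi hb, by simp only [vadd_eq_add]; abel⟩
      · exact ⟨z - a, Set.sub_mem_sub hz ha, by simp only [vadd_eq_add]; abel⟩
    have hunion : m (((a - b) +ᵥ I) ∪ I) < (3/2 : ENNReal) * m I :=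
      lt_of_le_of_lt (le_trans (measure_mono hsub) (by rw [measure_vadd])) h
    have hie : m (((a - b) +ᵥ I) ∪ I) + m (((a - b) +ᵥ I) ∩ I) = m ((a-b) +ᵥ I) + m I :=
      measure_union_add_inter' hvm I
    have hvadd : m ((a - b) +ᵥ I) = m I := measure_vadd _ _ _
    by_contra hcon
    push_neg at hcon
    have hintfin : m (((a - b) +ᵥ I) ∩ I) ≠ ⊤ :=
      ne_top_of_le_ne_top hIfin (measure_mono Set.inter_subset_right)
    have hlt : m ((a-b) +ᵥ I) + m I < (3/2 : ENNReal) * m I + m I / 2 := by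
      rw [← hie]
      exact ENNReal.add_lt_add_of_lt_of_le hintfin hunion hcon
    rw [hvadd, h32, two_mul] at hlt
    exact absurd hlt (lt_irrefl _)
  -- I is nonempty
  obtain ⟨i0, hi0⟩ : I.Nonempty := by
    rcases I.eq_empty_or_nonempty with rfl | hne
    · simp at hIpos
    · exact hne
  have hzero : (0:K) ∈ I - I := ⟨i0, hi0, i0, hi0, sub_self i0⟩
  -- closed under subtraction
  have hclosed : ∀ x ∈ I - I, ∀ y ∈ I - I, x - y ∈ I - I := by
    intro x hx y hy
    have hx' := key x hx
    have hy' := key y hy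
    have hnonempty : ((x +ᵥ I) ∩ (y +ᵥ I)).Nonempty := by
      by_contra hcon
      rw [Set.not_nonempty_iff_eq_empty] at hcon
      have hdisj : Disjoint ((x +ᵥ I) ∩ I) ((y +ᵥ I) ∩ I) :=
        Disjoint.mono Set.inter_subset_left Set.inter_subset_left
          (Set.disjoint_iff_inter_eq_empty.2 hcon)
      have hmu : m (((x +ᵥ I) ∩ I) ∪ ((y +ᵥ I) ∩ I)) = m ((x +ᵥ I) ∩ I) + m ((y +ᵥ I) ∩ I) :=
        measure_union hdisj ((hI.const_vadd y).inter hI)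
      have hle : m (((x +ᵥ I) ∩ I) ∪ ((y +ᵥ I) ∩ I)) ≤ m I :=
        measure_mono (Set.union_subset Set.inter_subset_right Set.inter_subset_right)
      have : m I < m I := by
        calc m I = m I / 2 + m I / 2 := (ENNReal.add_halves _).symm
          _ < m ((x +ᵥ I) ∩ I) + m ((y +ᵥ I) ∩ I) := ENNReal.add_lt_add hx' hy'
          _ = m (((x +ᵥ I) ∩ I) ∪ ((y +ᵥ I) ∩ I)) := hmu.symm
          _ ≤ m I := hle
      exact absurd this (lt_irrefl _)
    obtain ⟨z, ⟨a, ha, haz⟩, ⟨b, hb, hbz⟩⟩ := hnonempty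
    refine ⟨b, hb, a, ha, ?_⟩
    have hxy : x + a = y + b := by simpa [vadd_eq_add] using haz.trans hbz.symm
    exact sub_eq_sub_iff_add_eq_add.2 (by rw [hxy]; abel)
  -- build the subgroup
  refine ⟨{ carrier := I - I
            zero_mem' := hzero
            neg_mem' := fun {x} hx => by simpa using hclosed 0 hzero x hx
            add_mem' := fun {x y} hx hy => by
              simpa using hclosed x hx (-y) (by simpa using hclosed 0 hzero y hy) }, ?_, rfl⟩
  exact AddSubgroup.isOpen_of_mem_nhds _
    (g := 0) (Filter.mem_of_superset (m.sub_mem_nhds_zero_of_addHaar_pos I hI hIpos) fun z hz => hz)
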